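/- With T cut by the x-axis into T⁺ and T⁻, the three functions φ₁(x) = 1, φ₂(x) = t·(x − x₀), φ₃(x) = β(x)⁻¹ n·(x − x₀), where x₀ lies on the cut line, n is the unit normal to the cut pointing from T⁺ to T⁻, t is the rotation of n by 90°, and β equals β⁺ on T⁺ and β⁻ on T⁻, form a basis of the space of broken linear functions on T satisfying the interface conditions. -/

import Mathlib

/-!
`T ⊂ ℝ²` is cut by the x-axis into `T⁺ = T ∩ {x₂ ≥ 0}` and `T⁻ = T ∩ {x₂ ≤ 0}`.
A broken linear function is a pair of affine functions
`q⁺(x,y) = a⁺ + b⁺ x + c⁺ y` on `T⁺`, `q⁻(x,y) = a⁻ + b⁻ x + c⁻ y` on `T⁻`,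
encoded by the coefficient pair `((a⁺,b⁺,c⁺),(a⁻,b⁻,c⁻))`, continuous across
the cut line (`q⁺(x,0) = q⁻(x,0)` for all `x`) and with continuous scaled
normal derivative `β⁺ ∂q⁺/∂n = β⁻ ∂q⁻/∂n`, where `n = (0,-1)` is the unit
normal to the cut pointing from `T⁺` to `T⁻`, so the condition reads
`β⁺ c⁺ = β⁻ c⁻`.

The three functions of the statement are, with `x₀ = (x₀₁, 0)` on the cut line,
`n = (0,-1)`, and `t = (-n₂, n₁) = (1,0)`:
* `φ₁(x,y) = 1`, coefficients `(1,0,0)` on both pieces;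
* `φ₂(x,y) = t·((x,y) − x₀) = x − x₀₁`, coefficients `(−x₀₁,1,0)` on both pieces;
* `φ₃(x,y) = β(x,y)⁻¹ n·((x,y) − x₀) = −β^{±}⁻¹ y`, coefficients
  `(0,0,−(β⁺)⁻¹)` on `T⁺` and `(0,0,−(β⁻)⁻¹)` on `T⁻`.
-/

/-- The space of broken linear functions (coefficient representation). -/
def brokenSpace (βp βm : ℝ) : Submodule ℝ ((ℝ × ℝ × ℝ) × (ℝ × ℝ × ℝ)) where
  carrier := {p | (∀ x : ℝ, p.1.1 + p.1.2.1 * x = p.2.1 + p.2.2.1 * x) ∧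
      βp * p.1.2.2 = βm * p.2.2.2}
  add_mem' := by
    rintro a b ⟨ha1, ha2⟩ ⟨hb1, hb2⟩
    refine ⟨fun x => ?_, ?_⟩
    · have h1 := ha1 x; have h2 := hb1 x
      simp only [Prod.fst_add, Prod.snd_add] at *
      linarith
    · simp only [Prod.fst_add, Prod.snd_add] at *
      ring_nf
      linarith
  zero_mem' := by simp
  smul_mem' := by
    rintro r a ⟨ha1, ha2⟩
    refine ⟨fun x => ?_, ?_⟩
    · have h1 := ha1 x
      simp only [Prod.smul_fst, Prod.smul_snd, smul_eq_mul] at *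
      linear_combination r * h1
    · simp only [Prod.smul_fst, Prod.smul_snd, smul_eq_mul] at *
      linear_combination r * ha2

/-- With `x₀ = (x₀₁,0)` on the cut line, `n = (0,-1)` the unit
normal pointing from `T⁺` to `T⁻`, `t = (1,0)` its 90° rotation, and `β = β⁺`
on `T⁺`, `β⁻` on `T⁻`, the three broken linear functions `φ₁ = 1`,
`φ₂ = t·(x − x₀)`, `φ₃ = β⁻¹ n·(x − x₀)` form a basis of the broken linear
space: they are linearly independent and they span it. -/
theorem broken_basis (βp βm : ℝ) (hβp : 0 < βp) (hβm : 0 < βm) (x₀₁ : ℝ) :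
    LinearIndependent ℝ
      ![(((1 : ℝ), (0 : ℝ), (0 : ℝ)), ((1 : ℝ), (0 : ℝ), (0 : ℝ))),
        (((-x₀₁ : ℝ), (1 : ℝ), (0 : ℝ)), ((-x₀₁ : ℝ), (1 : ℝ), (0 : ℝ))),
        (((0 : ℝ), (0 : ℝ), (-βp⁻¹ : ℝ)), ((0 : ℝ), (0 : ℝ), (-βm⁻¹ : ℝ)))] ∧
    Submodule.span ℝ
      {(((1 : ℝ), (0 : ℝ), (0 : ℝ)), ((1 : ℝ), (0 : ℝ), (0 : ℝ))),
        (((-x₀₁ : ℝ), (1 : ℝ), (0 : ℝ)), ((-x₀₁ : ℝ), (1 : ℝ), (0 : ℝ))),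
        (((0 : ℝ), (0 : ℝ), (-βp⁻¹ : ℝ)), ((0 : ℝ), (0 : ℝ), (-βm⁻¹ : ℝ)))} =
      brokenSpace βp βm := by
  constructor
  · rw [Fintype.linearIndependent_iff]
    intro g hg
    simp only [Fin.sum_univ_three, Matrix.cons_val_zero, Matrix.cons_val_one, Matrix.head_cons,
      Matrix.cons_val_two, Matrix.tail_cons, Prod.smul_mk, smul_eq_mul, Prod.mk_add_mk, Prod.mk_eq_zero] at hg
    obtain ⟨⟨h1, h2, h3⟩, -⟩ := hg
    have hp : βp⁻¹ ≠ 0 := inv_ne_zero hβp.ne'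
    have hg2 : g 2 = 0 := by
      rcases mul_eq_zero.1 (by linarith : g 2 * (-βp⁻¹) = 0) with h | h
      · exact h
      · exact absurd (neg_eq_zero.1 h) hp
    have hg1 : g 1 = 0 := by linarith
    have hg0 : g 0 = 0 := by
      have := h1
      rw [hg1, hg2] at this
      linarith
    intro i
    fin_cases i <;> assumption
  · apply le_antisymm
    · rw [Submodule.span_le]
      rintro x (rfl | rfl | rfl)
      · exact ⟨fun y => by ring, by ring⟩
      · exact ⟨fun y => by ring, by ring⟩
      · refine ⟨fun y => by ring, ?_⟩
        simp only
        field_simp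
    · rintro ⟨⟨a, b, c⟩, ⟨a', b', c'⟩⟩ ⟨h1, h2⟩
      simp only at h1 h2
      have ha : a = a' := by have := h1 0; linarith
      have hb : b = b' := by have h0 := h1 0; have hh := h1 1; linarith
      have hc : c' = βp * c / βm := by field_simp; linarith
      have key : ((a, b, c), (a', b', c')) =
          (a + b * x₀₁) • (((1 : ℝ), (0 : ℝ), (0 : ℝ)), ((1 : ℝ), (0 : ℝ), (0 : ℝ)))
          + b • (((-x₀₁ : ℝ), (1 : ℝ), (0 : ℝ)), ((-x₀₁ : ℝ), (1 : ℝ), (0 : ℝ)))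
          + (-(βp * c)) • (((0 : ℝ), (0 : ℝ), (-βp⁻¹ : ℝ)), ((0 : ℝ), (0 : ℝ), (-βm⁻¹ : ℝ))) := by
        simp only [Prod.smul_mk, smul_eq_mul, Prod.mk_add_mk, Prod.mk.injEq]
        refine ⟨⟨by ring, by ring, ?_⟩, ⟨by rw [ha]; ring, by rw [hb]; ring, ?_⟩⟩
        · field_simp; ring
        · rw [hc]; field_simp; ring
      rw [key]
      refine Submodule.add_mem _ (Submodule.add_mem _ ?_ ?_) ?_ <;>
        exact Submodule.smul_mem _ _ (Submodule.subset_span (by simp))
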